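/- Let C : I → ℝ² be a C¹ plane curve on an open interval I, let D ⊂ ℝ² be open, and let u, v : D → I be differentiable functions such that C(u(p)) + C(v(p)) = 2p for all p ∈ D and [C'(u(p)), C'(v(p))] ≠ 0 on D. Then for every p ∈ D, ∇u(p) = −2·R·C'(v(p)) / [C'(u(p)), C'(v(p))] and ∇v(p) = 2·R·C'(u(p)) / [C'(u(p)), C'(v(p))]. -/

import Mathlib

noncomputable section

/-- Determinant of the 2×2 matrix with columns `X`, `Y`. -/
def det2 (X Y : ℝ × ℝ) : ℝ := X.1 * Y.2 - X.2 * Y.1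

/-- Counterclockwise rotation by 90 degrees: `R(x,y) = (−y, x)`. -/
def rot (X : ℝ × ℝ) : ℝ × ℝ := (-X.2, X.1)

/-- Gradient of `f : ℝ² → ℝ`. -/
def grad (f : ℝ × ℝ → ℝ) (p : ℝ × ℝ) : ℝ × ℝ :=
  (fderiv ℝ f p (1, 0), fderiv ℝ f p (0, 1))

/-- If `C(u(p)) + C(v(p)) = 2p` on `D` and `[C'(u(p)), C'(v(p))] ≠ 0`, then
`∇u(p) = −2·R·C'(v(p)) / [C'(u(p)), C'(v(p))]` and
`∇v(p) = 2·R·C'(u(p)) / [C'(u(p)), C'(v(p))]`. -/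
theorem statement1 (a b : ℝ) (C : ℝ → ℝ × ℝ) (hC : ContDiffOn ℝ 1 C (Set.Ioo a b))
    (D : Set (ℝ × ℝ)) (hD : IsOpen D)
    (u v : ℝ × ℝ → ℝ)
    (hu : DifferentiableOn ℝ u D) (hv : DifferentiableOn ℝ v D)
    (humem : ∀ p ∈ D, u p ∈ Set.Ioo a b) (hvmem : ∀ p ∈ D, v p ∈ Set.Ioo a b)
    (hchord : ∀ p ∈ D, C (u p) + C (v p) = (2 : ℝ) • p)
    (hdet : ∀ p ∈ D, det2 (deriv C (u p)) (deriv C (v p)) ≠ 0) :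
    ∀ p ∈ D,
      grad u p = (-2 / det2 (deriv C (u p)) (deriv C (v p))) • rot (deriv C (v p)) ∧
      grad v p = (2 / det2 (deriv C (u p)) (deriv C (v p))) • rot (deriv C (u p)) := by
  intro p hp
  have hIoo : IsOpen (Set.Ioo a b) := isOpen_Ioo
  have hCdiff : DifferentiableOn ℝ C (Set.Ioo a b) := hC.differentiableOn one_ne_zero
  have hCu : HasDerivAt C (deriv C (u p)) (u p) :=
    ((hCdiff.differentiableAt (hIoo.mem_nhds (humem p hp)))).hasDerivAt
  have hCv : HasDerivAt C (deriv C (v p)) (v p) :=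
    ((hCdiff.differentiableAt (hIoo.mem_nhds (hvmem p hp)))).hasDerivAt
  have hup : HasFDerivAt u (fderiv ℝ u p) p :=
    (hu.differentiableAt (hD.mem_nhds hp)).hasFDerivAt
  have hvp : HasFDerivAt v (fderiv ℝ v p) p :=
    (hv.differentiableAt (hD.mem_nhds hp)).hasFDerivAt
  have h1 : HasFDerivAt (fun q => C (u q) + C (v q))
      ((ContinuousLinearMap.smulRight (1 : ℝ →L[ℝ] ℝ) (deriv C (u p))).comp (fderiv ℝ u p) + (ContinuousLinearMap.smulRight (1 : ℝ →L[ℝ] ℝ) (deriv C (v p))).comp (fderiv ℝ v p)) p :=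
    ((hasDerivAt_iff_hasFDerivAt.mp hCu).comp p hup).add
      ((hasDerivAt_iff_hasFDerivAt.mp hCv).comp p hvp)
  have h2 : HasFDerivAt (fun q : ℝ × ℝ => (2 : ℝ) • q)
      ((2 : ℝ) • ContinuousLinearMap.id ℝ (ℝ × ℝ)) p :=
    by have := ((ContinuousLinearMap.id ℝ (ℝ × ℝ)).hasFDerivAt (x := p)).const_smul (2 : ℝ); exact this
  have heq : ((ContinuousLinearMap.smulRight (1 : ℝ →L[ℝ] ℝ) (deriv C (u p))).comp (fderiv ℝ u p) + (ContinuousLinearMap.smulRight (1 : ℝ →L[ℝ] ℝ) (deriv C (v p))).comp (fderiv ℝ v p)) =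
      ((2 : ℝ) • ContinuousLinearMap.id ℝ (ℝ × ℝ)) := by
    have h1' : HasFDerivAt (fun q : ℝ × ℝ => (2 : ℝ) • q)
        ((ContinuousLinearMap.smulRight (1 : ℝ →L[ℝ] ℝ) (deriv C (u p))).comp (fderiv ℝ u p) + (ContinuousLinearMap.smulRight (1 : ℝ →L[ℝ] ℝ) (deriv C (v p))).comp (fderiv ℝ v p)) p := by
      apply h1.congr_of_eventuallyEq
      filter_upwards [hD.mem_nhds hp] with q hq
      exact (hchord q hq).symm
    exact h1'.unique h2
  have key : ∀ w : ℝ × ℝ,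
      (fderiv ℝ u p w) • deriv C (u p) + (fderiv ℝ v p w) • deriv C (v p)
        = (2 : ℝ) • w := by
    intro w
    have := congrFun (congrArg DFunLike.coe heq) w
    simpa using this
  set A := deriv C (u p) with hA
  set B := deriv C (v p) with hB
  have e1 := key (1, 0)
  have e2 := key (0, 1)
  have e11 : fderiv ℝ u p (1,0) * A.1 + fderiv ℝ v p (1,0) * B.1 = 2 := by
    have := congrArg Prod.fst e1; simpa using this
  have e12 : fderiv ℝ u p (1,0) * A.2 + fderiv ℝ v p (1,0) * B.2 = 0 := by
    have := congrArg Prod.snd e1; simpa using this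
  have e21 : fderiv ℝ u p (0,1) * A.1 + fderiv ℝ v p (0,1) * B.1 = 0 := by
    have := congrArg Prod.fst e2; simpa using this
  have e22 : fderiv ℝ u p (0,1) * A.2 + fderiv ℝ v p (0,1) * B.2 = 2 := by
    have := congrArg Prod.snd e2; simpa using this
  have hd : A.1 * B.2 - A.2 * B.1 ≠ 0 := hdet p hp
  refine ⟨Prod.ext ?_ ?_, Prod.ext ?_ ?_⟩ <;>
    simp only [grad, det2, rot, Prod.smul_mk, smul_eq_mul] <;>
    field_simp
  · linear_combination B.2 * e11 - B.1 * e12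
  · linear_combination B.2 * e21 - B.1 * e22
  · linear_combination A.1 * e12 - A.2 * e11
  · linear_combination A.1 * e22 - A.2 * e21
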